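/- Let M be a unital C*-algebra, N ⊆ M a unital C*-subalgebra, E : M → N a conditional expectation, and u ∈ M a unitary such that E(u) is invertible in N. Then v := E(u*)·(E(u)E(u*))^{-1/2} is a unitary element of N, E(u)v = (E(u)E(u*))^{1/2}, and ‖uv − 1‖_E² = ‖E((uv−1)*(uv−1))‖ ≤ 2‖1 − (E(u)E(u*))^{1/2}‖. -/

import Mathlib

open ComplexStarModule Complex
open scoped NNReal

theorem stmt16 {M : Type*} [CStarAlgebra M] [PartialOrder M] [StarOrderedRing M]
    -- `N` is a unital C*-subalgebra of `M`
    (N : StarSubalgebra ℂ M) (hNclosed : IsClosed (N : Set M))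
    -- `E` is a conditional expectation onto `N`
    (E : M →ₗ[ℂ] M) (hErange : ∀ x : M, E x ∈ N) (hEid : ∀ b ∈ N, E b = b)
    (hEpos : ∀ x : M, 0 ≤ x → 0 ≤ E x)
    (hEbimod : ∀ x : M, ∀ b ∈ N, ∀ c ∈ N, E (b * x * c) = b * E x * c)
    -- `u` is a unitary such that `E u` is invertible in `N`
    (u : M) (hu : u ∈ unitary M)
    (y : M) (hy : y ∈ N) (hyl : y * E u = 1) (hyr : E u * y = 1)
    -- `s` is the positive square root of `E u * E (star u)` and `t = s⁻¹`,
    -- so that `v = E (star u) * t` is the element `E(u*) (E(u) E(u*))^{-1/2}`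
    (s : M) (hs : 0 ≤ s) (hss : s * s = E u * E (star u))
    (t : M) (hts : t * s = 1) (hst : s * t = 1) :
    -- `v` is a unitary element of `N`
    E (star u) * t ∈ N ∧
    E (star u) * t ∈ unitary M ∧
    -- `E u * v = (E u * E (star u))^{1/2}`
    E u * (E (star u) * t) = s ∧
    -- `‖u v - 1‖_E ^ 2 = ‖E ((uv-1)* (uv-1))‖ ≤ 2 ‖1 - (E u E u*)^{1/2}‖`
    Real.sqrt ‖E (star (u * (E (star u) * t) - 1) * (u * (E (star u) * t) - 1))‖ ^ 2 =
      ‖E (star (u * (E (star u) * t) - 1) * (u * (E (star u) * t) - 1))‖ ∧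
    ‖E (star (u * (E (star u) * t) - 1) * (u * (E (star u) * t) - 1))‖ ≤
      2 * ‖1 - s‖ := by
  haveI : IsClosed (N : Set M) := hNclosed
  -- basic selfadjointness facts
  have hssa : IsSelfAdjoint s := IsSelfAdjoint.of_nonneg hs
  have htsa : star t = t := by
    have h1 : star t * s = 1 := by
      rw [← hssa.star_eq, ← star_mul, hst, star_one]
    calc star t = star t * (s * t) := by rw [hst, mul_one]
    _ = (star t * s) * t := by rw [mul_assoc]
    _ = t := by rw [h1, one_mul]
  -- `E` is star-preserving
  have hEsa : ∀ z : M, IsSelfAdjoint z → IsSelfAdjoint (E z) := by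
    intro z hz
    rw [← CFC.posPart_sub_negPart z hz, map_sub]
    exact (IsSelfAdjoint.of_nonneg (hEpos _ (CFC.posPart_nonneg z))).sub
      (IsSelfAdjoint.of_nonneg (hEpos _ (CFC.negPart_nonneg z)))
  have hEstar : ∀ z : M, E (star z) = star (E z) := by
    intro z
    have hz := realPart_add_I_smul_imaginaryPart z
    have hre : IsSelfAdjoint ((ℜ z : M)) := (ℜ z).2
    have him : IsSelfAdjoint ((ℑ z : M)) := (ℑ z).2
    calc E (star z) = E (star ((ℜ z : M) + I • (ℑ z : M))) := by rw [hz]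
    _ = E ((ℜ z : M) + (-I) • (ℑ z : M)) := by
        rw [star_add, star_smul, hre.star_eq, him.star_eq, Complex.star_def, Complex.conj_I]
    _ = E (ℜ z : M) + (-I) • E (ℑ z : M) := by rw [map_add, map_smul]
    _ = star (E (ℜ z : M) + I • E (ℑ z : M)) := by
        rw [star_add, star_smul, (hEsa _ hre).star_eq, (hEsa _ him).star_eq,
          Complex.star_def, Complex.conj_I]
    _ = star (E ((ℜ z : M) + I • (ℑ z : M))) := by rw [map_add, map_smul]
    _ = star (E z) := by rw [hz]
  have hb : E (star u) = star (E u) := hEstar u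
  -- positivity of `E u * E (star u)`
  have hx : (0 : M) ≤ E u * E (star u) := by
    rw [← hss]
    calc (0 : M) ≤ star s * s := star_mul_self_nonneg s
    _ = s * s := by rw [hssa.star_eq]
  have hxsa : IsSelfAdjoint (E u * E (star u)) := IsSelfAdjoint.of_nonneg hx
  -- `s ∈ N` via spectral permanence (functional calculus in the subalgebra)
  have hsmem : s ∈ N := by
    set x' : N := ⟨E u * E (star u), mul_mem (hErange u) (hErange (star u))⟩ with hx'
    have hx'norm : IsStarNormal x' := by
      constructor
      ext
      show star (E u * E (star u)) * (E u * E (star u))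
        = (E u * E (star u)) * star (E u * E (star u))
      rw [hxsa.star_eq]
    have hxnorm : IsStarNormal ((N.subtype : N →⋆ₐ[ℂ] M) x') := hxsa.isStarNormal
    have hcont : ContinuousOn (fun w : ℂ => (Real.sqrt w.re : ℂ)) (spectrum ℂ x') := by
      fun_prop
    have key := StarAlgHom.map_cfc (R := ℂ) (N.subtype : N →⋆ₐ[ℂ] M)
      (fun w : ℂ => (Real.sqrt w.re : ℂ)) x' hcont (by fun_prop) hx'norm hxnorm
    have h1 : CFC.sqrt (E u * E (star u)) = s := CFC.sqrt_unique hss hs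
    have h2 : CFC.sqrt (E u * E (star u)) =
        cfc (fun w : ℂ => (Real.sqrt w.re : ℂ)) (E u * E (star u)) := by
      rw [CFC.sqrt_eq_cfc, cfc_nnreal_eq_real NNReal.sqrt _ hx]
      rw [cfc_real_eq_complex (fun r : ℝ => ((NNReal.sqrt r.toNNReal : ℝ≥0) : ℝ)) hxsa]
      unfold Real.sqrt
      rfl
    have hcoe : ((cfc (fun w : ℂ => (Real.sqrt w.re : ℂ)) x' : N) : M)
        = cfc (fun w : ℂ => (Real.sqrt w.re : ℂ)) (E u * E (star u)) := key
    have : s = ((cfc (fun w : ℂ => (Real.sqrt w.re : ℂ)) x' : N) : M) := by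
      rw [hcoe, ← h2, h1]
    rw [this]
    exact (cfc (fun w : ℂ => (Real.sqrt w.re : ℂ)) x' : N).2
  -- `t ∈ N`
  have htform : t = (star y * y) * s := by
    have h1 : (star y * y) * s * s = 1 := by
      calc (star y * y) * s * s = star y * y * (s * s) := by rw [mul_assoc]
      _ = star y * (y * E u) * E (star u) := by rw [hss, ← mul_assoc, ← mul_assoc]
      _ = star y * star (E u) := by rw [hyl, mul_one, hb]
      _ = star (E u * y) := by rw [star_mul]
      _ = 1 := by rw [hyr, star_one]
    calc t = ((star y * y) * s * s) * t := by rw [h1, one_mul]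
    _ = (star y * y) * s * (s * t) := by rw [mul_assoc]
    _ = (star y * y) * s := by rw [hst, mul_one]
  have htmem : t ∈ N := htform ▸ mul_mem (mul_mem (star_mem hy) hy) hsmem
  have hvmem : E (star u) * t ∈ N := mul_mem (hErange (star u)) htmem
  -- star of v
  have hvstar : star (E (star u) * t) = t * E u := by
    rw [star_mul, htsa, hb, star_star]
  -- v*v = 1
  have hvv : star (E (star u) * t) * (E (star u) * t) = 1 := by
    rw [hvstar]
    calc t * E u * (E (star u) * t) = t * (E u * E (star u)) * t := by
          rw [mul_assoc, mul_assoc, mul_assoc]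
    _ = (t * s) * (s * t) := by rw [← hss, mul_assoc, mul_assoc, mul_assoc]
    _ = 1 := by rw [hts, hst, one_mul]
  -- vv* = 1, using t * t = star y * y
  have htt : t * t = star y * y := by
    calc t * t = ((star y * y) * s) * t := by rw [← htform]
    _ = (star y * y) * (s * t) := by rw [mul_assoc]
    _ = star y * y := by rw [hst, mul_one]
  have hvv' : (E (star u) * t) * star (E (star u) * t) = 1 := by
    rw [hvstar, hb]
    calc star (E u) * t * (t * E u) = star (E u) * (t * t) * E u := by
          rw [mul_assoc, mul_assoc, mul_assoc]
    _ = star (E u) * star y * (y * E u) := by rw [htt, mul_assoc, mul_assoc, mul_assoc]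
    _ = star (y * E u) * (y * E u) := by rw [star_mul]
    _ = 1 := by rw [hyl, star_one, one_mul]
  have hvuni : E (star u) * t ∈ unitary M := Unitary.mem_iff.mpr ⟨hvv, hvv'⟩
  -- `E u * v = s`
  have hav : E u * (E (star u) * t) = s := by
    calc E u * (E (star u) * t) = (s * s) * t := by rw [hss, mul_assoc]
    _ = s * (s * t) := by rw [mul_assoc]
    _ = s := by rw [hst, mul_one]
  -- the expectation of `(uv-1)*(uv-1)`
  have h1u : star u * u = 1 := (Unitary.mem_iff.mp hu).1
  have hE1 : E 1 = 1 := hEid 1 (one_mem N)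
  have hEuv : E (u * (E (star u) * t)) = s := by
    have := hEbimod u 1 (one_mem N) (E (star u) * t) hvmem
    rw [one_mul, one_mul] at this
    rw [this]; exact hav
  have hEvu : E (star (E (star u) * t) * star u) = s := by
    have := hEbimod (star u) (star (E (star u) * t)) (star_mem hvmem) 1 (one_mem N)
    rw [mul_one, mul_one] at this
    rw [this, hvstar]
    calc t * E u * E (star u) = t * (s * s) := by rw [mul_assoc, ← hss]
    _ = (t * s) * s := by rw [mul_assoc]
    _ = s := by rw [hts, one_mul]
  set v := E (star u) * t with hvdef
  have hexpand : star (u * v - 1) * (u * v - 1) = (1 - star v * star u) + (1 - u * v) := by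
    have hstw : star (u * v - 1) = star v * star u - 1 := by rw [star_sub, star_mul, star_one]
    rw [hstw]
    have : (star v * star u - 1) * (u * v - 1)
        = star v * (star u * u) * v - star v * star u - u * v + 1 := by noncomm_ring
    rw [this, h1u, mul_one, hvv]
    noncomm_ring
  have hEw : E (star (u * v - 1) * (u * v - 1)) = (1 - s) + (1 - s) := by
    rw [hexpand, map_add, map_sub, map_sub, hE1, hEuv, hEvu]
  refine ⟨hvmem, hvuni, hav, Real.sq_sqrt (norm_nonneg _), ?_⟩
  rw [hEw]
  calc ‖(1 - s) + (1 - s)‖ ≤ ‖1 - s‖ + ‖1 - s‖ := norm_add_le _ _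
  _ = 2 * ‖1 - s‖ := by ring
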